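/- arXiv:math/0407153 — 2 statements merged into one kernel-verified Lean document; each statement's English description precedes it below -/
import Mathlib

section
/- Let Ω ⊆ ℝ² be open, let f : Ω → ℝ³ be an immersion in conformal curvature coordinates with conformal factor ρ, unit normal ν and principal curvatures κ₁, κ₂, set κ := κ₂ − κ₁, and suppose the function κρ² is constant on Ω. Then for every smooth u : Ω → ℝ one has, at every point of Ω: ∂₁(uκ·∂₁f) − ∂₂(uκ·∂₂f) = κ(∂₁u·∂₁f − ∂₂u·∂₂f) − κ²ρ²·u·ν. -/
open scoped RealInnerProductSpace ContDiff

/-- First partial derivative (in the first coordinate direction of `ℝ × ℝ`). -/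
noncomputable def pd1 {E : Type*} [NormedAddCommGroup E] [NormedSpace ℝ E]
    (f : ℝ × ℝ → E) : ℝ × ℝ → E := fun p => fderiv ℝ f p (1, 0)

/-- Second partial derivative (in the second coordinate direction of `ℝ × ℝ`). -/
noncomputable def pd2 {E : Type*} [NormedAddCommGroup E] [NormedSpace ℝ E]
    (f : ℝ × ℝ → E) : ℝ × ℝ → E := fun p => fderiv ℝ f p (0, 1)

/-- `f : Ω → ℝ³` is an immersion in conformal curvature coordinates, with conformal
factor `ρ`, unit normal `ν` and principal curvatures `κ₁, κ₂`. -/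
structure IsCCC (Ω : Set (ℝ × ℝ)) (f ν : ℝ × ℝ → EuclideanSpace ℝ (Fin 3))
    (ρ κ₁ κ₂ : ℝ × ℝ → ℝ) : Prop where
  smooth_f : ContDiffOn ℝ ∞ f Ω
  smooth_ρ : ContDiffOn ℝ ∞ ρ Ω
  smooth_ν : ContDiffOn ℝ ∞ ν Ω
  smooth_κ₁ : ContDiffOn ℝ ∞ κ₁ Ω
  smooth_κ₂ : ContDiffOn ℝ ∞ κ₂ Ω
  ρ_pos : ∀ p ∈ Ω, 0 < ρ p
  g11 : ∀ p ∈ Ω, ⟪pd1 f p, pd1 f p⟫ = ρ p ^ 2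
  g22 : ∀ p ∈ Ω, ⟪pd2 f p, pd2 f p⟫ = ρ p ^ 2
  g12 : ∀ p ∈ Ω, ⟪pd1 f p, pd2 f p⟫ = 0
  nu_unit : ∀ p ∈ Ω, ⟪ν p, ν p⟫ = 1
  nu_f1 : ∀ p ∈ Ω, ⟪ν p, pd1 f p⟫ = 0
  nu_f2 : ∀ p ∈ Ω, ⟪ν p, pd2 f p⟫ = 0
  h12 : ∀ p ∈ Ω, ⟪ν p, pd1 (pd2 f) p⟫ = 0
  h11 : ∀ p ∈ Ω, ⟪ν p, pd1 (pd1 f) p⟫ = ρ p ^ 2 * κ₁ p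
  h22 : ∀ p ∈ Ω, ⟪ν p, pd2 (pd2 f) p⟫ = ρ p ^ 2 * κ₂ p

private lemma infty_add_one_le : (∞ : WithTop ℕ∞) + 1 ≤ ∞ := by
  have : ((⊤:ℕ∞)+1 : ℕ∞) = ⊤ := by simp
  exact_mod_cast le_of_eq this

private lemma one_le_infty : (1 : WithTop ℕ∞) ≤ ∞ := by exact_mod_cast le_top

private lemma infty_ne_zero' : (∞ : WithTop ℕ∞) ≠ 0 :=
  ne_of_gt (lt_of_lt_of_le zero_lt_one one_le_infty)

private lemma two_le_infty : (2 : WithTop ℕ∞) ≤ ∞ := by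
  have : ((2:ℕ∞) : WithTop ℕ∞) ≤ ((⊤:ℕ∞) : WithTop ℕ∞) := by exact_mod_cast (le_top : (2:ℕ∞) ≤ ⊤)
  simpa using this

private lemma contDiffOn_pd1 {E : Type*} [NormedAddCommGroup E] [NormedSpace ℝ E]
    {Ω : Set (ℝ × ℝ)} (hΩ : IsOpen Ω) {g : ℝ × ℝ → E} (hg : ContDiffOn ℝ ∞ g Ω) :
    ContDiffOn ℝ ∞ (pd1 g) Ω :=
  (hg.fderiv_of_isOpen hΩ infty_add_one_le).clm_apply contDiffOn_const

private lemma contDiffOn_pd2 {E : Type*} [NormedAddCommGroup E] [NormedSpace ℝ E]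
    {Ω : Set (ℝ × ℝ)} (hΩ : IsOpen Ω) {g : ℝ × ℝ → E} (hg : ContDiffOn ℝ ∞ g Ω) :
    ContDiffOn ℝ ∞ (pd2 g) Ω :=
  (hg.fderiv_of_isOpen hΩ infty_add_one_le).clm_apply contDiffOn_const

private lemma pd_symm {Ω : Set (ℝ × ℝ)} (hΩ : IsOpen Ω)
    {g : ℝ × ℝ → EuclideanSpace ℝ (Fin 3)} (hg : ContDiffOn ℝ ∞ g Ω)
    {p : ℝ × ℝ} (hp : p ∈ Ω) : pd1 (pd2 g) p = pd2 (pd1 g) p := by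
  have hat : ContDiffAt ℝ ∞ g p := hg.contDiffAt (hΩ.mem_nhds hp)
  have hsymm := hat.isSymmSndFDerivAt (by rw [minSmoothness_of_isRCLikeNormedField]; exact two_le_infty)
  have hdf : DifferentiableAt ℝ (fderiv ℝ g) p :=
    ((hg.fderiv_of_isOpen hΩ infty_add_one_le).contDiffAt (hΩ.mem_nhds hp)).differentiableAt
      infty_ne_zero'
  have key : ∀ v w : ℝ × ℝ, fderiv ℝ (fun q => fderiv ℝ g q w) p v
      = fderiv ℝ (fderiv ℝ g) p v w := by
    intro v w
    rw [fderiv_clm_apply hdf (differentiableAt_const w)]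
    simp
  show fderiv ℝ (fun q => fderiv ℝ g q (0,1)) p (1,0)
      = fderiv ℝ (fun q => fderiv ℝ g q (1,0)) p (0,1)
  rw [key, key, hsymm]

private lemma ccc_span3 {r : ℝ} (hr : 0 < r) (a b n w : EuclideanSpace ℝ (Fin 3))
    (haa : ⟪a, a⟫ = r ^ 2) (hbb : ⟪b, b⟫ = r ^ 2) (hab : ⟪a, b⟫ = 0)
    (hnn : ⟪n, n⟫ = 1) (hna : ⟪n, a⟫ = 0) (hnb : ⟪n, b⟫ = 0)
    (hwa : ⟪a, w⟫ = 0) (hwb : ⟪b, w⟫ = 0) (hwn : ⟪n, w⟫ = 0) : w = 0 := by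
  have hr' : r ≠ 0 := hr.ne'
  set v : Fin 3 → EuclideanSpace ℝ (Fin 3) := ![r⁻¹ • a, r⁻¹ • b, n] with hv
  have horth : Orthonormal ℝ v := by
    rw [orthonormal_iff_ite]
    intro i j
    fin_cases i <;> fin_cases j
    · show ⟪r⁻¹ • a, r⁻¹ • a⟫ = 1
      rw [real_inner_smul_left, real_inner_smul_right, haa]; field_simp
    · show ⟪r⁻¹ • a, r⁻¹ • b⟫ = 0
      rw [real_inner_smul_left, real_inner_smul_right, hab]; simp
    · show ⟪r⁻¹ • a, n⟫ = 0
      rw [real_inner_smul_left, real_inner_comm n a, hna]; simp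
    · show ⟪r⁻¹ • b, r⁻¹ • a⟫ = 0
      rw [real_inner_smul_left, real_inner_smul_right, real_inner_comm a b, hab]; simp
    · show ⟪r⁻¹ • b, r⁻¹ • b⟫ = 1
      rw [real_inner_smul_left, real_inner_smul_right, hbb]; field_simp
    · show ⟪r⁻¹ • b, n⟫ = 0
      rw [real_inner_smul_left, real_inner_comm n b, hnb]; simp
    · show ⟪n, r⁻¹ • a⟫ = 0
      rw [real_inner_smul_right, hna]; simp
    · show ⟪n, r⁻¹ • b⟫ = 0
      rw [real_inner_smul_right, hnb]; simp
    · show ⟪n, n⟫ = 1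
      exact hnn
  have hcard : Fintype.card (Fin 3) = Module.finrank ℝ (EuclideanSpace ℝ (Fin 3)) := by simp
  let B := basisOfLinearIndependentOfCardEqFinrank horth.linearIndependent hcard
  have hB : ⇑B = v := coe_basisOfLinearIndependentOfCardEqFinrank _ _
  let OB := B.toOrthonormalBasis (by rwa [hB])
  have hOB : ⇑OB = v := by rw [Module.Basis.coe_toOrthonormalBasis, hB]
  have hsum := OB.sum_repr' w
  rw [Fin.sum_univ_three, hOB] at hsum
  have h0 : ⟪v 0, w⟫ = 0 := by
    show ⟪r⁻¹ • a, w⟫ = 0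
    rw [real_inner_smul_left, hwa, mul_zero]
  have h1 : ⟪v 1, w⟫ = 0 := by
    show ⟪r⁻¹ • b, w⟫ = 0
    rw [real_inner_smul_left, hwb, mul_zero]
  have h2 : ⟪v 2, w⟫ = 0 := by
    show ⟪n, w⟫ = 0
    exact hwn
  rw [h0, h1, h2] at hsum
  simpa using hsum.symm


/-- The identity `∂₁(uκ·∂₁f) − ∂₂(uκ·∂₂f)
= κ(∂₁u·∂₁f − ∂₂u·∂₂f) − κ²ρ²·u·ν`, where `κ = κ₂ − κ₁`, provided `κρ²` is constant. -/
theorem d_df_J1 (Ω : Set (ℝ × ℝ)) (hΩ : IsOpen Ω)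
    (f ν : ℝ × ℝ → EuclideanSpace ℝ (Fin 3)) (ρ κ₁ κ₂ : ℝ × ℝ → ℝ)
    (hccc : IsCCC Ω f ν ρ κ₁ κ₂)
    (hconst : ∃ c : ℝ, ∀ p ∈ Ω, (κ₂ p - κ₁ p) * ρ p ^ 2 = c)
    (u : ℝ × ℝ → ℝ) (hu : ContDiffOn ℝ ∞ u Ω) :
    ∀ p ∈ Ω,
      pd1 (fun q => (u q * (κ₂ q - κ₁ q)) • pd1 f q) p
          - pd2 (fun q => (u q * (κ₂ q - κ₁ q)) • pd2 f q) p
        = (κ₂ p - κ₁ p) • (pd1 u p • pd1 f p - pd2 u p • pd2 f p)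
          - ((κ₂ p - κ₁ p) ^ 2 * ρ p ^ 2 * u p) • ν p := by
  obtain ⟨c, hc⟩ := hconst
  intro p hp
  have hmem : Ω ∈ nhds p := hΩ.mem_nhds hp
  have he1s : ContDiffOn ℝ ∞ (pd1 f) Ω := contDiffOn_pd1 hΩ hccc.smooth_f
  have he2s : ContDiffOn ℝ ∞ (pd2 f) Ω := contDiffOn_pd2 hΩ hccc.smooth_f
  have de1 : DifferentiableAt ℝ (pd1 f) p :=
    (he1s.contDiffAt hmem).differentiableAt infty_ne_zero'
  have de2 : DifferentiableAt ℝ (pd2 f) p :=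
    (he2s.contDiffAt hmem).differentiableAt infty_ne_zero'
  have dρ : DifferentiableAt ℝ ρ p :=
    (hccc.smooth_ρ.contDiffAt hmem).differentiableAt infty_ne_zero'
  have dκ₁ : DifferentiableAt ℝ κ₁ p :=
    (hccc.smooth_κ₁.contDiffAt hmem).differentiableAt infty_ne_zero'
  have dκ₂ : DifferentiableAt ℝ κ₂ p :=
    (hccc.smooth_κ₂.contDiffAt hmem).differentiableAt infty_ne_zero'
  have du : DifferentiableAt ℝ u p :=
    (hu.contDiffAt hmem).differentiableAt infty_ne_zero'
  have dκ : DifferentiableAt ℝ (fun q => κ₂ q - κ₁ q) p := dκ₂.sub dκ₁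
  have duk : DifferentiableAt ℝ (fun q => u q * (κ₂ q - κ₁ q)) p := du.mul dκ
  have fcong : ∀ {F G : ℝ × ℝ → ℝ}, (∀ q ∈ Ω, F q = G q) →
      fderiv ℝ F p = fderiv ℝ G p := fun {F G} h =>
    Filter.EventuallyEq.fderiv_eq (by filter_upwards [hmem] with q hq using h q hq)
  -- first fundamental form derivatives
  have k11 : ∀ v : ℝ × ℝ, ⟪fderiv ℝ (pd1 f) p v, pd1 f p⟫ = ρ p * fderiv ℝ ρ p v := by
    intro v
    have h := fcong (F := fun q => ⟪pd1 f q, pd1 f q⟫) (G := fun q => ρ q * ρ q)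
      (fun q hq => by show ⟪pd1 f q, pd1 f q⟫ = ρ q * ρ q; rw [hccc.g11 q hq]; ring)
    have h' : fderiv ℝ (fun q => ⟪pd1 f q, pd1 f q⟫) p v
        = fderiv ℝ (fun q => ρ q * ρ q) p v := by rw [h]
    rw [fderiv_inner_apply (𝕜 := ℝ) de1 de1 v, fderiv_fun_mul dρ dρ] at h'
    simp only [ContinuousLinearMap.add_apply, ContinuousLinearMap.coe_smul', Pi.smul_apply,
      smul_eq_mul] at h'
    rw [real_inner_comm (fderiv ℝ (pd1 f) p v) (pd1 f p)] at h'
    linarith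
  have k22 : ∀ v : ℝ × ℝ, ⟪fderiv ℝ (pd2 f) p v, pd2 f p⟫ = ρ p * fderiv ℝ ρ p v := by
    intro v
    have h := fcong (F := fun q => ⟪pd2 f q, pd2 f q⟫) (G := fun q => ρ q * ρ q)
      (fun q hq => by show ⟪pd2 f q, pd2 f q⟫ = ρ q * ρ q; rw [hccc.g22 q hq]; ring)
    have h' : fderiv ℝ (fun q => ⟪pd2 f q, pd2 f q⟫) p v
        = fderiv ℝ (fun q => ρ q * ρ q) p v := by rw [h]
    rw [fderiv_inner_apply (𝕜 := ℝ) de2 de2 v, fderiv_fun_mul dρ dρ] at h'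
    simp only [ContinuousLinearMap.add_apply, ContinuousLinearMap.coe_smul', Pi.smul_apply,
      smul_eq_mul] at h'
    rw [real_inner_comm (fderiv ℝ (pd2 f) p v) (pd2 f p)] at h'
    linarith
  have k12 : ∀ v : ℝ × ℝ, ⟪pd1 f p, fderiv ℝ (pd2 f) p v⟫
      + ⟪fderiv ℝ (pd1 f) p v, pd2 f p⟫ = 0 := by
    intro v
    have h := fcong (F := fun q => ⟪pd1 f q, pd2 f q⟫) (G := fun _ => (0:ℝ))
      (fun q hq => hccc.g12 q hq)
    have h' : fderiv ℝ (fun q => ⟪pd1 f q, pd2 f q⟫) p v = 0 := by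
      rw [h]; simp
    rw [fderiv_inner_apply (𝕜 := ℝ) de1 de2 v] at h'
    exact h'
  have hsy : fderiv ℝ (pd1 f) p (0,1) = fderiv ℝ (pd2 f) p (1,0) :=
    (pd_symm hΩ hccc.smooth_f hp).symm
  -- derivative of the constant κ ρ²
  have hDk : ∀ v : ℝ × ℝ, (κ₂ p - κ₁ p) * (ρ p * fderiv ℝ ρ p v + ρ p * fderiv ℝ ρ p v)
      + ρ p * ρ p * fderiv ℝ (fun q => κ₂ q - κ₁ q) p v = 0 := by
    intro v
    have h := fcong (F := fun q => (κ₂ q - κ₁ q) * (ρ q * ρ q)) (G := fun _ => c)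
      (fun q hq => by show (κ₂ q - κ₁ q) * (ρ q * ρ q) = c; rw [← hc q hq]; ring)
    have h' : fderiv ℝ (fun q => (κ₂ q - κ₁ q) * (ρ q * ρ q)) p v = 0 := by
      rw [h]; simp
    rw [fderiv_fun_mul dκ (show DifferentiableAt ℝ (fun q => ρ q * ρ q) p from dρ.mul dρ), fderiv_fun_mul dρ dρ] at h'
    simp only [ContinuousLinearMap.add_apply, ContinuousLinearMap.coe_smul', Pi.smul_apply,
      smul_eq_mul] at h'
    linarith
  have hduk : ∀ v : ℝ × ℝ, fderiv ℝ (fun q => u q * (κ₂ q - κ₁ q)) p v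
      = u p * fderiv ℝ (fun q => κ₂ q - κ₁ q) p v + (κ₂ p - κ₁ p) * fderiv ℝ u p v := by
    intro v
    rw [fderiv_fun_mul du dκ]
    simp only [ContinuousLinearMap.add_apply, ContinuousLinearMap.coe_smul', Pi.smul_apply,
      smul_eq_mul]
  have hL1 : pd1 (fun q => (u q * (κ₂ q - κ₁ q)) • pd1 f q) p
      = (u p * (κ₂ p - κ₁ p)) • fderiv ℝ (pd1 f) p (1,0)
        + (fderiv ℝ (fun q => u q * (κ₂ q - κ₁ q)) p (1,0)) • pd1 f p := by
    show fderiv ℝ (fun q => (u q * (κ₂ q - κ₁ q)) • pd1 f q) p (1,0) = _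
    rw [fderiv_fun_smul duk de1]
    simp only [ContinuousLinearMap.add_apply, ContinuousLinearMap.coe_smul', Pi.smul_apply,
      ContinuousLinearMap.smulRight_apply]
  have hL2 : pd2 (fun q => (u q * (κ₂ q - κ₁ q)) • pd2 f q) p
      = (u p * (κ₂ p - κ₁ p)) • fderiv ℝ (pd2 f) p (0,1)
        + (fderiv ℝ (fun q => u q * (κ₂ q - κ₁ q)) p (0,1)) • pd2 f p := by
    show fderiv ℝ (fun q => (u q * (κ₂ q - κ₁ q)) • pd2 f q) p (0,1) = _
    rw [fderiv_fun_smul duk de2]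
    simp only [ContinuousLinearMap.add_apply, ContinuousLinearMap.coe_smul', Pi.smul_apply,
      ContinuousLinearMap.smulRight_apply]
  -- the nine inner products
  have haa := hccc.g11 p hp
  have hbb := hccc.g22 p hp
  have hab := hccc.g12 p hp
  have hba : ⟪pd2 f p, pd1 f p⟫ = 0 := (real_inner_comm (pd1 f p) (pd2 f p)).trans hab
  have hnn := hccc.nu_unit p hp
  have hna := hccc.nu_f1 p hp
  have hnb := hccc.nu_f2 p hp
  have han : ⟪pd1 f p, ν p⟫ = 0 := (real_inner_comm (ν p) (pd1 f p)).trans hna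
  have hbn : ⟪pd2 f p, ν p⟫ = 0 := (real_inner_comm (ν p) (pd2 f p)).trans hnb
  have haA1 : ⟪pd1 f p, fderiv ℝ (pd1 f) p (1,0)⟫ = ρ p * fderiv ℝ ρ p (1,0) :=
    (real_inner_comm _ _).trans (k11 (1,0))
  have haB2 : ⟪pd1 f p, fderiv ℝ (pd2 f) p (0,1)⟫ = -(ρ p * fderiv ℝ ρ p (1,0)) := by
    have h := k12 (0,1)
    rw [hsy, k22 (1,0)] at h
    linarith
  have hbA1 : ⟪pd2 f p, fderiv ℝ (pd1 f) p (1,0)⟫ = -(ρ p * fderiv ℝ ρ p (0,1)) := by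
    have h := k12 (1,0)
    have h2 : ⟪pd1 f p, fderiv ℝ (pd2 f) p (1,0)⟫ = ρ p * fderiv ℝ ρ p (0,1) := by
      rw [← hsy]
      exact (real_inner_comm _ _).trans (k11 (0,1))
    rw [h2] at h
    rw [real_inner_comm]
    linarith
  have hbB2 : ⟪pd2 f p, fderiv ℝ (pd2 f) p (0,1)⟫ = ρ p * fderiv ℝ ρ p (0,1) :=
    (real_inner_comm _ _).trans (k22 (0,1))
  have hnA1 : ⟪ν p, fderiv ℝ (pd1 f) p (1,0)⟫ = ρ p ^ 2 * κ₁ p := hccc.h11 p hp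
  have hnB2 : ⟪ν p, fderiv ℝ (pd2 f) p (0,1)⟫ = ρ p ^ 2 * κ₂ p := hccc.h22 p hp
  rw [hL1, hL2, ← sub_eq_zero]
  refine ccc_span3 (hccc.ρ_pos p hp) (pd1 f p) (pd2 f p) (ν p) _
    haa hbb hab hnn hna hnb ?_ ?_ ?_
  · simp only [inner_sub_right, inner_add_right, real_inner_smul_right]
    rw [haA1, haa, haB2, hab, han, hduk (1,0), hduk (0,1)]
    rw [show pd1 u p = fderiv ℝ u p (1,0) from rfl, show pd2 u p = fderiv ℝ u p (0,1) from rfl]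
    linear_combination (u p) * hDk (1,0)
  · simp only [inner_sub_right, inner_add_right, real_inner_smul_right]
    rw [hbA1, hba, hbB2, hbb, hbn, hduk (1,0), hduk (0,1)]
    rw [show pd1 u p = fderiv ℝ u p (1,0) from rfl, show pd2 u p = fderiv ℝ u p (0,1) from rfl]
    linear_combination (-(u p)) * hDk (0,1)
  · simp only [inner_sub_right, inner_add_right, real_inner_smul_right]
    rw [hnA1, hna, hnB2, hnb, hnn]
    rw [show pd1 u p = fderiv ℝ u p (1,0) from rfl, show pd2 u p = fderiv ℝ u p (0,1) from rfl]
    ring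
end

section
/- Let Ω ⊆ ℝ² be open and connected, let f : Ω → ℝ³ be an immersion in conformal curvature coordinates with conformal factor ρ, unit normal ν and principal curvatures κ₁, κ₂ with κ₁ + κ₂ constant on Ω, and let u : Ω → ℝ be a Jacobi field. Then at every point of Ω: −(∂₁∂₁(uν) + ∂₂∂₂(uν)) = 2κ₁·∂₁u·∂₁f + 2κ₂·∂₂u·∂₂f + 2ρ²(κ₁² + κ₂²)·u·ν. -/
open scoped RealInnerProductSpace ContDiff

section helpers

variable {E : Type*} [NormedAddCommGroup E] [NormedSpace ℝ E]
variable {Ω : Set (ℝ × ℝ)} {p : ℝ × ℝ}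

lemma diffAt_of_cd (hΩ : IsOpen Ω) {g : ℝ × ℝ → E} (hg : ContDiffOn ℝ ∞ g Ω)
    (hp : p ∈ Ω) : DifferentiableAt ℝ g p :=
  (hg.contDiffAt (hΩ.mem_nhds hp)).differentiableAt (by norm_num)

lemma cd_pd1 (hΩ : IsOpen Ω) {g : ℝ × ℝ → E} (hg : ContDiffOn ℝ ∞ g Ω) :
    ContDiffOn ℝ ∞ (pd1 g) Ω :=
  (hg.fderiv_of_isOpen hΩ (by norm_num)).clm_apply contDiffOn_const

lemma cd_pd2 (hΩ : IsOpen Ω) {g : ℝ × ℝ → E} (hg : ContDiffOn ℝ ∞ g Ω) :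
    ContDiffOn ℝ ∞ (pd2 g) Ω :=
  (hg.fderiv_of_isOpen hΩ (by norm_num)).clm_apply contDiffOn_const

lemma pd1_congr (hΩ : IsOpen Ω) {g h : ℝ × ℝ → E} (hgh : ∀ q ∈ Ω, g q = h q)
    (hp : p ∈ Ω) : pd1 g p = pd1 h p := by
  have h' : g =ᶠ[nhds p] h := Filter.eventuallyEq_of_mem (hΩ.mem_nhds hp) hgh
  show fderiv ℝ g p (1, 0) = fderiv ℝ h p (1, 0)
  rw [h'.fderiv_eq]

lemma pd2_congr (hΩ : IsOpen Ω) {g h : ℝ × ℝ → E} (hgh : ∀ q ∈ Ω, g q = h q)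
    (hp : p ∈ Ω) : pd2 g p = pd2 h p := by
  have h' : g =ᶠ[nhds p] h := Filter.eventuallyEq_of_mem (hΩ.mem_nhds hp) hgh
  show fderiv ℝ g p (0, 1) = fderiv ℝ h p (0, 1)
  rw [h'.fderiv_eq]

variable {F : Type*} [NormedAddCommGroup F] [InnerProductSpace ℝ F]

lemma pd1_inner {a b : ℝ × ℝ → F} (ha : DifferentiableAt ℝ a p)
    (hb : DifferentiableAt ℝ b p) :
    pd1 (fun q => ⟪a q, b q⟫) p = ⟪pd1 a p, b p⟫ + ⟪a p, pd1 b p⟫ := by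
  show fderiv ℝ (fun q => ⟪a q, b q⟫) p (1, 0) = _
  rw [fderiv_inner_apply ℝ ha hb]; exact add_comm _ _

lemma pd2_inner {a b : ℝ × ℝ → F} (ha : DifferentiableAt ℝ a p)
    (hb : DifferentiableAt ℝ b p) :
    pd2 (fun q => ⟪a q, b q⟫) p = ⟪pd2 a p, b p⟫ + ⟪a p, pd2 b p⟫ := by
  show fderiv ℝ (fun q => ⟪a q, b q⟫) p (0, 1) = _
  rw [fderiv_inner_apply ℝ ha hb]; exact add_comm _ _

lemma pd1_smul {c : ℝ × ℝ → ℝ} {a : ℝ × ℝ → E} (hc : DifferentiableAt ℝ c p)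
    (ha : DifferentiableAt ℝ a p) :
    pd1 (fun q => c q • a q) p = pd1 c p • a p + c p • pd1 a p := by
  show fderiv ℝ (fun q => c q • a q) p (1, 0) = _
  rw [fderiv_fun_smul hc ha]; simp [pd1]; module

lemma pd2_smul {c : ℝ × ℝ → ℝ} {a : ℝ × ℝ → E} (hc : DifferentiableAt ℝ c p)
    (ha : DifferentiableAt ℝ a p) :
    pd2 (fun q => c q • a q) p = pd2 c p • a p + c p • pd2 a p := by
  show fderiv ℝ (fun q => c q • a q) p (0, 1) = _
  rw [fderiv_fun_smul hc ha]; simp [pd2]; module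

lemma pd1_mul {c d : ℝ × ℝ → ℝ} (hc : DifferentiableAt ℝ c p)
    (hd : DifferentiableAt ℝ d p) :
    pd1 (fun q => c q * d q) p = pd1 c p * d p + c p * pd1 d p := by
  show fderiv ℝ (fun q => c q * d q) p (1, 0) = _
  rw [fderiv_fun_mul hc hd]; simp [pd1]; ring

lemma pd2_mul {c d : ℝ × ℝ → ℝ} (hc : DifferentiableAt ℝ c p)
    (hd : DifferentiableAt ℝ d p) :
    pd2 (fun q => c q * d q) p = pd2 c p * d p + c p * pd2 d p := by
  show fderiv ℝ (fun q => c q * d q) p (0, 1) = _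
  rw [fderiv_fun_mul hc hd]; simp [pd2]; ring

lemma pd1_add {a b : ℝ × ℝ → E} (ha : DifferentiableAt ℝ a p)
    (hb : DifferentiableAt ℝ b p) :
    pd1 (fun q => a q + b q) p = pd1 a p + pd1 b p := by
  show fderiv ℝ (fun q => a q + b q) p (1, 0) = _
  rw [fderiv_fun_add ha hb]; rfl

lemma pd2_add {a b : ℝ × ℝ → E} (ha : DifferentiableAt ℝ a p)
    (hb : DifferentiableAt ℝ b p) :
    pd2 (fun q => a q + b q) p = pd2 a p + pd2 b p := by
  show fderiv ℝ (fun q => a q + b q) p (0, 1) = _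
  rw [fderiv_fun_add ha hb]; rfl

lemma pd1_neg {a : ℝ × ℝ → E} :
    pd1 (fun q => -(a q)) p = -pd1 a p := by
  show fderiv ℝ (fun q => -(a q)) p (1, 0) = _
  rw [fderiv_fun_neg]; rfl

lemma pd2_neg {a : ℝ × ℝ → E} :
    pd2 (fun q => -(a q)) p = -pd2 a p := by
  show fderiv ℝ (fun q => -(a q)) p (0, 1) = _
  rw [fderiv_fun_neg]; rfl

lemma pd1_const {c : E} : pd1 (fun _ => c) p = 0 := by
  show fderiv ℝ (fun _ : ℝ × ℝ => c) p (1, 0) = 0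
  rw [fderiv_fun_const]; rfl

lemma pd2_const {c : E} : pd2 (fun _ => c) p = 0 := by
  show fderiv ℝ (fun _ : ℝ × ℝ => c) p (0, 1) = 0
  rw [fderiv_fun_const]; rfl

/-- Second partials commute for smooth functions on an open set. -/
lemma pd_comm (hΩ : IsOpen Ω) {g : ℝ × ℝ → E} (hg : ContDiffOn ℝ ∞ g Ω)
    (hp : p ∈ Ω) : pd1 (pd2 g) p = pd2 (pd1 g) p := by
  have hat : ContDiffAt ℝ ∞ g p := hg.contDiffAt (hΩ.mem_nhds hp)
  have hsymm : IsSymmSndFDerivAt ℝ g p := hat.isSymmSndFDerivAt (by simp; exact WithTop.coe_le_coe.2 le_top)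
  have hdf : DifferentiableAt ℝ (fderiv ℝ g) p :=
    diffAt_of_cd hΩ (hg.fderiv_of_isOpen hΩ (by norm_num)) hp
  have e1 : pd1 (pd2 g) p = fderiv ℝ (fderiv ℝ g) p (1, 0) (0, 1) := by
    show fderiv ℝ (fun q => fderiv ℝ g q (0, 1)) p (1, 0) = _
    rw [fderiv_clm_apply hdf (differentiableAt_const _)]
    simp
  have e2 : pd2 (pd1 g) p = fderiv ℝ (fderiv ℝ g) p (0, 1) (1, 0) := by
    show fderiv ℝ (fun q => fderiv ℝ g q (1, 0)) p (0, 1) = _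
    rw [fderiv_clm_apply hdf (differentiableAt_const _)]
    simp
  rw [e1, e2, hsymm]

end helpers

/-- Test against an orthogonal basis of ℝ³. -/
lemma eq_zero_of_orth (e₁ e₂ n v : EuclideanSpace ℝ (Fin 3))
    (h1 : e₁ ≠ 0) (h2 : e₂ ≠ 0) (hn : n ≠ 0)
    (h12 : ⟪e₁, e₂⟫ = 0) (h1n : ⟪e₁, n⟫ = 0) (h2n : ⟪e₂, n⟫ = 0)
    (hv1 : ⟪v, e₁⟫ = 0) (hv2 : ⟪v, e₂⟫ = 0) (hvn : ⟪v, n⟫ = 0) : v = 0 := by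
  set b : Fin 3 → EuclideanSpace ℝ (Fin 3) := ![e₁, e₂, n] with hb
  have h21 : ⟪e₂, e₁⟫ = 0 := by rw [real_inner_comm]; exact h12
  have hn1 : ⟪n, e₁⟫ = 0 := by rw [real_inner_comm]; exact h1n
  have hn2 : ⟪n, e₂⟫ = 0 := by rw [real_inner_comm]; exact h2n
  have hnz : ∀ i, b i ≠ 0 := by
    intro i; fin_cases i
    exacts [h1, h2, hn]
  have horth : Pairwise fun i j => ⟪b i, b j⟫ = 0 := by
    intro i j hij
    fin_cases i <;> fin_cases j
    exacts [absurd rfl hij, h12, h1n, h21, absurd rfl hij, h2n, hn1, hn2, absurd rfl hij]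
  have hli : LinearIndependent ℝ b :=
    linearIndependent_of_ne_zero_of_inner_eq_zero hnz horth
  have hspan : Submodule.span ℝ (Set.range b) = ⊤ :=
    hli.span_eq_top_of_card_eq_finrank (by simp)
  have hvmem : v ∈ (Submodule.span ℝ (Set.range b))ᗮ := by
    rw [Submodule.mem_orthogonal']
    intro u hu
    induction hu using Submodule.span_induction with
    | mem x hx =>
        obtain ⟨i, rfl⟩ := hx
        fin_cases i
        exacts [hv1, hv2, hvn]
    | zero => simp
    | add x y _ _ hx hy => rw [inner_add_right, hx, hy]; simp
    | smul c x _ hx => rw [real_inner_smul_right, hx]; simp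
  rw [hspan, Submodule.top_orthogonal_eq_bot] at hvmem
  simpa using hvmem

/-- For a Jacobi field `u` on a CMC immersion in conformal curvature
coordinates, `−Δ₀(uν) = 2κ₁·∂₁u·∂₁f + 2κ₂·∂₂u·∂₂f + 2ρ²(κ₁² + κ₂²)·u·ν`. -/
theorem d_d_u_nu_J0 (Ω : Set (ℝ × ℝ)) (hΩ : IsOpen Ω) (hconn : IsConnected Ω)
    (f ν : ℝ × ℝ → EuclideanSpace ℝ (Fin 3)) (ρ κ₁ κ₂ : ℝ × ℝ → ℝ)
    (hccc : IsCCC Ω f ν ρ κ₁ κ₂)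
    (hH : ∃ c : ℝ, ∀ p ∈ Ω, κ₁ p + κ₂ p = c)
    (u : ℝ × ℝ → ℝ) (hu : ContDiffOn ℝ ∞ u Ω)
    (hjacobi : ∀ p ∈ Ω,
      pd1 (pd1 u) p + pd2 (pd2 u) p + ρ p ^ 2 * (κ₁ p ^ 2 + κ₂ p ^ 2) * u p = 0) :
    ∀ p ∈ Ω,
      -(pd1 (pd1 (fun q => u q • ν q)) p + pd2 (pd2 (fun q => u q • ν q)) p)
        = (2 * κ₁ p * pd1 u p) • pd1 f p + (2 * κ₂ p * pd2 u p) • pd2 f p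
          + (2 * ρ p ^ 2 * (κ₁ p ^ 2 + κ₂ p ^ 2) * u p) • ν p := by
  obtain ⟨sf, sρ, sν, sκ₁, sκ₂, ρ_pos, g11, g22, g12, nu_unit, nu_f1, nu_f2, h12, h11, h22⟩ := hccc
  -- smoothness of derived functions
  have sE1 : ContDiffOn ℝ ∞ (pd1 f) Ω := cd_pd1 hΩ sf
  have sE2 : ContDiffOn ℝ ∞ (pd2 f) Ω := cd_pd2 hΩ sf
  have sN1 : ContDiffOn ℝ ∞ (pd1 ν) Ω := cd_pd1 hΩ sν
  have sN2 : ContDiffOn ℝ ∞ (pd2 ν) Ω := cd_pd2 hΩ sν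
  have sF11 : ContDiffOn ℝ ∞ (pd1 (pd1 f)) Ω := cd_pd1 hΩ sE1
  have sF12 : ContDiffOn ℝ ∞ (pd1 (pd2 f)) Ω := cd_pd1 hΩ sE2
  have sF21 : ContDiffOn ℝ ∞ (pd2 (pd1 f)) Ω := cd_pd2 hΩ sE1
  have sF22 : ContDiffOn ℝ ∞ (pd2 (pd2 f)) Ω := cd_pd2 hΩ sE2
  have su1 : ContDiffOn ℝ ∞ (pd1 u) Ω := cd_pd1 hΩ hu
  have su2 : ContDiffOn ℝ ∞ (pd2 u) Ω := cd_pd2 hΩ hu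
  -- differentiability
  have df : ∀ q ∈ Ω, DifferentiableAt ℝ f q := fun q hq => diffAt_of_cd hΩ sf hq
  have dν : ∀ q ∈ Ω, DifferentiableAt ℝ ν q := fun q hq => diffAt_of_cd hΩ sν hq
  have dρ : ∀ q ∈ Ω, DifferentiableAt ℝ ρ q := fun q hq => diffAt_of_cd hΩ sρ hq
  have dκ₁ : ∀ q ∈ Ω, DifferentiableAt ℝ κ₁ q := fun q hq => diffAt_of_cd hΩ sκ₁ hq
  have dκ₂ : ∀ q ∈ Ω, DifferentiableAt ℝ κ₂ q := fun q hq => diffAt_of_cd hΩ sκ₂ hq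
  have du : ∀ q ∈ Ω, DifferentiableAt ℝ u q := fun q hq => diffAt_of_cd hΩ hu hq
  have dE1 : ∀ q ∈ Ω, DifferentiableAt ℝ (pd1 f) q := fun q hq => diffAt_of_cd hΩ sE1 hq
  have dE2 : ∀ q ∈ Ω, DifferentiableAt ℝ (pd2 f) q := fun q hq => diffAt_of_cd hΩ sE2 hq
  have dN1 : ∀ q ∈ Ω, DifferentiableAt ℝ (pd1 ν) q := fun q hq => diffAt_of_cd hΩ sN1 hq
  have dN2 : ∀ q ∈ Ω, DifferentiableAt ℝ (pd2 ν) q := fun q hq => diffAt_of_cd hΩ sN2 hq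
  have dF11 : ∀ q ∈ Ω, DifferentiableAt ℝ (pd1 (pd1 f)) q := fun q hq => diffAt_of_cd hΩ sF11 hq
  have dF12 : ∀ q ∈ Ω, DifferentiableAt ℝ (pd1 (pd2 f)) q := fun q hq => diffAt_of_cd hΩ sF12 hq
  have dF21 : ∀ q ∈ Ω, DifferentiableAt ℝ (pd2 (pd1 f)) q := fun q hq => diffAt_of_cd hΩ sF21 hq
  have dF22 : ∀ q ∈ Ω, DifferentiableAt ℝ (pd2 (pd2 f)) q := fun q hq => diffAt_of_cd hΩ sF22 hq
  have du1 : ∀ q ∈ Ω, DifferentiableAt ℝ (pd1 u) q := fun q hq => diffAt_of_cd hΩ su1 hq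
  have du2 : ∀ q ∈ Ω, DifferentiableAt ℝ (pd2 u) q := fun q hq => diffAt_of_cd hΩ su2 hq
  -- the mixed second derivative of f, seen both ways, is normal-free
  have h21 : ∀ q ∈ Ω, ⟪ν q, pd2 (pd1 f) q⟫ = 0 := by
    intro q hq
    rw [← pd_comm hΩ sf hq]; exact h12 q hq
  -- nonvanishing of the frame
  have hE1ne : ∀ q ∈ Ω, pd1 f q ≠ 0 := by
    intro q hq h
    have hg := g11 q hq
    have hρ := ρ_pos q hq
    rw [h, inner_zero_left] at hg
    nlinarith
  have hE2ne : ∀ q ∈ Ω, pd2 f q ≠ 0 := by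
    intro q hq h
    have hg := g22 q hq
    have hρ := ρ_pos q hq
    rw [h, inner_zero_left] at hg
    nlinarith
  have hνne : ∀ q ∈ Ω, ν q ≠ 0 := by
    intro q hq h
    have hg := nu_unit q hq
    rw [h, inner_zero_left] at hg
    norm_num at hg
  -- commuted basic inner products
  have cE1ν : ∀ q ∈ Ω, ⟪pd1 f q, ν q⟫ = 0 := by
    intro q hq; rw [real_inner_comm]; exact nu_f1 q hq
  have cE2ν : ∀ q ∈ Ω, ⟪pd2 f q, ν q⟫ = 0 := by
    intro q hq; rw [real_inner_comm]; exact nu_f2 q hq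
  -- derivatives of ⟪ν, ν⟫ = 1
  have n01 : ∀ q ∈ Ω, ⟪pd1 ν q, ν q⟫ = 0 := by
    intro q hq
    have h : pd1 (fun r => ⟪ν r, ν r⟫) q = pd1 (fun _ => (1 : ℝ)) q :=
      pd1_congr hΩ (fun r hr => nu_unit r hr) hq
    rw [pd1_inner (dν q hq) (dν q hq), pd1_const] at h
    have hc := real_inner_comm (pd1 ν q) (ν q)
    linarith
  have n02 : ∀ q ∈ Ω, ⟪pd2 ν q, ν q⟫ = 0 := by
    intro q hq
    have h : pd2 (fun r => ⟪ν r, ν r⟫) q = pd2 (fun _ => (1 : ℝ)) q :=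
      pd2_congr hΩ (fun r hr => nu_unit r hr) hq
    rw [pd2_inner (dν q hq) (dν q hq), pd2_const] at h
    have hc := real_inner_comm (pd2 ν q) (ν q)
    linarith
  -- derivatives of ⟪ν, ∂f⟩ = 0
  have n1 : ∀ q ∈ Ω, ⟪pd1 ν q, pd1 f q⟫ = -(ρ q ^ 2 * κ₁ q) := by
    intro q hq
    have h : pd1 (fun r => ⟪ν r, pd1 f r⟫) q = pd1 (fun _ => (0 : ℝ)) q :=
      pd1_congr hΩ (fun r hr => nu_f1 r hr) hq
    rw [pd1_inner (dν q hq) (dE1 q hq), pd1_const, h11 q hq] at h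
    linarith
  have n2 : ∀ q ∈ Ω, ⟪pd1 ν q, pd2 f q⟫ = 0 := by
    intro q hq
    have h : pd1 (fun r => ⟪ν r, pd2 f r⟫) q = pd1 (fun _ => (0 : ℝ)) q :=
      pd1_congr hΩ (fun r hr => nu_f2 r hr) hq
    rw [pd1_inner (dν q hq) (dE2 q hq), pd1_const, h12 q hq] at h
    linarith
  have n3 : ∀ q ∈ Ω, ⟪pd2 ν q, pd1 f q⟫ = 0 := by
    intro q hq
    have h : pd2 (fun r => ⟪ν r, pd1 f r⟫) q = pd2 (fun _ => (0 : ℝ)) q :=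
      pd2_congr hΩ (fun r hr => nu_f1 r hr) hq
    rw [pd2_inner (dν q hq) (dE1 q hq), pd2_const, h21 q hq] at h
    linarith
  have n4 : ∀ q ∈ Ω, ⟪pd2 ν q, pd2 f q⟫ = -(ρ q ^ 2 * κ₂ q) := by
    intro q hq
    have h : pd2 (fun r => ⟪ν r, pd2 f r⟫) q = pd2 (fun _ => (0 : ℝ)) q :=
      pd2_congr hΩ (fun r hr => nu_f2 r hr) hq
    rw [pd2_inner (dν q hq) (dE2 q hq), pd2_const, h22 q hq] at h
    linarith
  -- Weingarten equations
  have W1 : ∀ q ∈ Ω, pd1 ν q = (-κ₁ q) • pd1 f q := by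
    intro q hq
    have hz : pd1 ν q + κ₁ q • pd1 f q = 0 := by
      refine eq_zero_of_orth (pd1 f q) (pd2 f q) (ν q) _ (hE1ne q hq) (hE2ne q hq)
        (hνne q hq) (g12 q hq) (cE1ν q hq) (cE2ν q hq) ?_ ?_ ?_
      · rw [inner_add_left, real_inner_smul_left, n1 q hq, g11 q hq]; ring
      · rw [inner_add_left, real_inner_smul_left, n2 q hq, g12 q hq]; ring
      · rw [inner_add_left, real_inner_smul_left, n01 q hq, cE1ν q hq]; ring
    rw [eq_neg_of_add_eq_zero_left hz, neg_smul]
  have W2 : ∀ q ∈ Ω, pd2 ν q = (-κ₂ q) • pd2 f q := by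
    intro q hq
    have hz : pd2 ν q + κ₂ q • pd2 f q = 0 := by
      refine eq_zero_of_orth (pd1 f q) (pd2 f q) (ν q) _ (hE1ne q hq) (hE2ne q hq)
        (hνne q hq) (g12 q hq) (cE1ν q hq) (cE2ν q hq) ?_ ?_ ?_
      · rw [inner_add_left, real_inner_smul_left, n3 q hq, real_inner_comm, g12 q hq]; ring
      · rw [inner_add_left, real_inner_smul_left, n4 q hq, g22 q hq]; ring
      · rw [inner_add_left, real_inner_smul_left, n02 q hq, cE2ν q hq]; ring
    rw [eq_neg_of_add_eq_zero_left hz, neg_smul]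
  -- now fix the point p
  intro p hp
  -- metric derivative identities at p
  have m1 : ⟪pd1 (pd1 f) p, pd1 f p⟫ = ρ p * pd1 ρ p := by
    have h : pd1 (fun r => ⟪pd1 f r, pd1 f r⟫) p = pd1 (fun r => ρ r * ρ r) p :=
      pd1_congr hΩ (fun r hr => by rw [g11 r hr, sq]) hp
    rw [pd1_inner (dE1 p hp) (dE1 p hp), pd1_mul (dρ p hp) (dρ p hp)] at h
    have hc := real_inner_comm (pd1 (pd1 f) p) (pd1 f p)
    linarith
  have m2 : ⟪pd2 (pd1 f) p, pd1 f p⟫ = ρ p * pd2 ρ p := by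
    have h : pd2 (fun r => ⟪pd1 f r, pd1 f r⟫) p = pd2 (fun r => ρ r * ρ r) p :=
      pd2_congr hΩ (fun r hr => by rw [g11 r hr, sq]) hp
    rw [pd2_inner (dE1 p hp) (dE1 p hp), pd2_mul (dρ p hp) (dρ p hp)] at h
    have hc := real_inner_comm (pd2 (pd1 f) p) (pd1 f p)
    linarith
  have m3 : ⟪pd1 (pd2 f) p, pd2 f p⟫ = ρ p * pd1 ρ p := by
    have h : pd1 (fun r => ⟪pd2 f r, pd2 f r⟫) p = pd1 (fun r => ρ r * ρ r) p :=
      pd1_congr hΩ (fun r hr => by rw [g22 r hr, sq]) hp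
    rw [pd1_inner (dE2 p hp) (dE2 p hp), pd1_mul (dρ p hp) (dρ p hp)] at h
    have hc := real_inner_comm (pd1 (pd2 f) p) (pd2 f p)
    linarith
  have m4 : ⟪pd2 (pd2 f) p, pd2 f p⟫ = ρ p * pd2 ρ p := by
    have h : pd2 (fun r => ⟪pd2 f r, pd2 f r⟫) p = pd2 (fun r => ρ r * ρ r) p :=
      pd2_congr hΩ (fun r hr => by rw [g22 r hr, sq]) hp
    rw [pd2_inner (dE2 p hp) (dE2 p hp), pd2_mul (dρ p hp) (dρ p hp)] at h
    have hc := real_inner_comm (pd2 (pd2 f) p) (pd2 f p)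
    linarith
  have hcF : pd1 (pd2 f) p = pd2 (pd1 f) p := pd_comm hΩ sf hp
  have m5 : ⟪pd1 (pd1 f) p, pd2 f p⟫ = -(ρ p * pd2 ρ p) := by
    have h : pd1 (fun r => ⟪pd1 f r, pd2 f r⟫) p = pd1 (fun _ => (0 : ℝ)) p :=
      pd1_congr hΩ (fun r hr => g12 r hr) hp
    rw [pd1_inner (dE1 p hp) (dE2 p hp), pd1_const, hcF] at h
    have hc := real_inner_comm (pd1 f p) (pd2 (pd1 f) p)
    linarith [m2]
  have m6 : ⟪pd2 (pd2 f) p, pd1 f p⟫ = -(ρ p * pd1 ρ p) := by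
    have h : pd2 (fun r => ⟪pd1 f r, pd2 f r⟫) p = pd2 (fun _ => (0 : ℝ)) p :=
      pd2_congr hΩ (fun r hr => g12 r hr) hp
    rw [pd2_inner (dE1 p hp) (dE2 p hp), pd2_const] at h
    have hc := real_inner_comm (pd1 f p) (pd2 (pd2 f) p)
    have hc2 : ⟪pd2 (pd1 f) p, pd2 f p⟫ = ρ p * pd1 ρ p := by rw [← hcF]; exact m3
    linarith
  -- Codazzi-type identities at p
  have C1 : ρ p ^ 2 * pd1 κ₂ p = ρ p * pd1 ρ p * (κ₁ p - κ₂ p) := by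
    have hA : pd1 (fun r => ⟪ν r, pd2 (pd2 f) r⟫) p = pd1 (fun r => ρ r * ρ r * κ₂ r) p :=
      pd1_congr hΩ (fun r hr => by rw [h22 r hr, sq]) hp
    rw [pd1_inner (dν p hp) (dF22 p hp),
      pd1_mul (c := fun r => ρ r * ρ r) (d := κ₂) ((dρ p hp).mul (dρ p hp)) (dκ₂ p hp),
      pd1_mul (dρ p hp) (dρ p hp)] at hA
    have hB : pd2 (fun r => ⟪ν r, pd1 (pd2 f) r⟫) p = pd2 (fun _ => (0 : ℝ)) p :=
      pd2_congr hΩ (fun r hr => h12 r hr) hp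
    rw [pd2_inner (dν p hp) (dF12 p hp), pd2_const] at hB
    have hcan : ⟪ν p, pd1 (pd2 (pd2 f)) p⟫ = ⟪ν p, pd2 (pd1 (pd2 f)) p⟫ := by
      rw [pd_comm hΩ sE2 hp]
    have e1 : ⟪pd1 ν p, pd2 (pd2 f) p⟫ = κ₁ p * (ρ p * pd1 ρ p) := by
      rw [W1 p hp, real_inner_smul_left, real_inner_comm, m6]; ring
    have e2 : ⟪pd2 ν p, pd1 (pd2 f) p⟫ = -(κ₂ p * (ρ p * pd1 ρ p)) := by
      rw [W2 p hp, real_inner_smul_left, real_inner_comm, m3]; ring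
    rw [e1] at hA
    rw [e2] at hB
    linear_combination hB - hA + hcan
  have C2 : ρ p ^ 2 * pd2 κ₁ p = ρ p * pd2 ρ p * (κ₂ p - κ₁ p) := by
    have hA : pd2 (fun r => ⟪ν r, pd1 (pd1 f) r⟫) p = pd2 (fun r => ρ r * ρ r * κ₁ r) p :=
      pd2_congr hΩ (fun r hr => by rw [h11 r hr, sq]) hp
    rw [pd2_inner (dν p hp) (dF11 p hp),
      pd2_mul (c := fun r => ρ r * ρ r) (d := κ₁) ((dρ p hp).mul (dρ p hp)) (dκ₁ p hp),
      pd2_mul (dρ p hp) (dρ p hp)] at hA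
    have hB : pd1 (fun r => ⟪ν r, pd2 (pd1 f) r⟫) p = pd1 (fun _ => (0 : ℝ)) p :=
      pd1_congr hΩ (fun r hr => h21 r hr) hp
    rw [pd1_inner (dν p hp) (dF21 p hp), pd1_const] at hB
    have hcan : ⟪ν p, pd2 (pd1 (pd1 f)) p⟫ = ⟪ν p, pd1 (pd2 (pd1 f)) p⟫ := by
      rw [pd_comm hΩ sE1 hp]
    have e1 : ⟪pd2 ν p, pd1 (pd1 f) p⟫ = κ₂ p * (ρ p * pd2 ρ p) := by
      rw [W2 p hp, real_inner_smul_left, real_inner_comm, m5]; ring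
    have e2 : ⟪pd1 ν p, pd2 (pd1 f) p⟫ = -(κ₁ p * (ρ p * pd2 ρ p)) := by
      rw [W1 p hp, real_inner_smul_left, real_inner_comm, m2]; ring
    rw [e1] at hA
    rw [e2] at hB
    linear_combination hB - hA + hcan
  -- CMC: derivative of the mean curvature vanishes
  obtain ⟨c, hc⟩ := hH
  have hk1 : pd1 κ₁ p + pd1 κ₂ p = 0 := by
    have h : pd1 (fun r => κ₁ r + κ₂ r) p = pd1 (fun _ => c) p := pd1_congr hΩ hc hp
    rwa [pd1_add (dκ₁ p hp) (dκ₂ p hp), pd1_const] at h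
  have hk2 : pd2 κ₁ p + pd2 κ₂ p = 0 := by
    have h : pd2 (fun r => κ₁ r + κ₂ r) p = pd2 (fun _ => c) p := pd2_congr hΩ hc hp
    rwa [pd2_add (dκ₁ p hp) (dκ₂ p hp), pd2_const] at h
  -- second derivatives of ν at p
  have hP1 : pd1 (pd1 ν) p
      = (-(pd1 κ₁ p)) • pd1 f p + (-κ₁ p) • pd1 (pd1 f) p := by
    have h : pd1 (pd1 ν) p = pd1 (fun r => (-κ₁ r) • pd1 f r) p := pd1_congr hΩ W1 hp
    rw [pd1_smul (c := fun r => -κ₁ r) (a := pd1 f) (dκ₁ p hp).neg (dE1 p hp),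
      pd1_neg (a := κ₁)] at h
    exact h
  have hP2 : pd2 (pd2 ν) p
      = (-(pd2 κ₂ p)) • pd2 f p + (-κ₂ p) • pd2 (pd2 f) p := by
    have h : pd2 (pd2 ν) p = pd2 (fun r => (-κ₂ r) • pd2 f r) p := pd2_congr hΩ W2 hp
    rw [pd2_smul (c := fun r => -κ₂ r) (a := pd2 f) (dκ₂ p hp).neg (dE2 p hp),
      pd2_neg (a := κ₂)] at h
    exact h
  -- the Laplacian of ν at p
  have hLE1 : ⟪pd1 (pd1 ν) p + pd2 (pd2 ν) p, pd1 f p⟫ = 0 := by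
    rw [inner_add_left, hP1, hP2, inner_add_left, inner_add_left,
      real_inner_smul_left, real_inner_smul_left, real_inner_smul_left,
      real_inner_smul_left, m1, m6, g11 p hp, real_inner_comm, g12 p hp]
    linear_combination C1 - ρ p ^ 2 * hk1
  have hLE2 : ⟪pd1 (pd1 ν) p + pd2 (pd2 ν) p, pd2 f p⟫ = 0 := by
    rw [inner_add_left, hP1, hP2, inner_add_left, inner_add_left,
      real_inner_smul_left, real_inner_smul_left, real_inner_smul_left,
      real_inner_smul_left, m4, m5, g22 p hp, g12 p hp]
    linear_combination C2 - ρ p ^ 2 * hk2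
  have hLν : ⟪pd1 (pd1 ν) p + pd2 (pd2 ν) p, ν p⟫ = (-(ρ p ^ 2 * (κ₁ p ^ 2 + κ₂ p ^ 2))) := by
    have cF11ν : ⟪pd1 (pd1 f) p, ν p⟫ = ρ p ^ 2 * κ₁ p := by
      rw [real_inner_comm]; exact h11 p hp
    have cF22ν : ⟪pd2 (pd2 f) p, ν p⟫ = ρ p ^ 2 * κ₂ p := by
      rw [real_inner_comm]; exact h22 p hp
    rw [inner_add_left, hP1, hP2, inner_add_left, inner_add_left,
      real_inner_smul_left, real_inner_smul_left, real_inner_smul_left,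
      real_inner_smul_left, cF11ν, cF22ν, cE1ν p hp, cE2ν p hp]
    ring
  have hL : pd1 (pd1 ν) p + pd2 (pd2 ν) p = ((-(ρ p ^ 2 * (κ₁ p ^ 2 + κ₂ p ^ 2)))) • ν p := by
    have hz : (pd1 (pd1 ν) p + pd2 (pd2 ν) p) + (ρ p ^ 2 * (κ₁ p ^ 2 + κ₂ p ^ 2)) • ν p = 0 := by
      refine eq_zero_of_orth (pd1 f p) (pd2 f p) (ν p) _ (hE1ne p hp) (hE2ne p hp)
        (hνne p hp) (g12 p hp) (cE1ν p hp) (cE2ν p hp) ?_ ?_ ?_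
      · rw [inner_add_left, real_inner_smul_left, hLE1, nu_f1 p hp]; ring
      · rw [inner_add_left, real_inner_smul_left, hLE2, nu_f2 p hp]; ring
      · rw [inner_add_left, real_inner_smul_left, hLν, nu_unit p hp]; ring
    rw [eq_neg_of_add_eq_zero_left hz, neg_smul]
  -- first derivatives of u • ν on Ω
  have hw1 : ∀ q ∈ Ω, pd1 (fun r => u r • ν r) q = pd1 u q • ν q + u q • pd1 ν q :=
    fun q hq => pd1_smul (du q hq) (dν q hq)
  have hw2 : ∀ q ∈ Ω, pd2 (fun r => u r • ν r) q = pd2 u q • ν q + u q • pd2 ν q :=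
    fun q hq => pd2_smul (du q hq) (dν q hq)
  have hS1 : pd1 (pd1 (fun q => u q • ν q)) p
      = (pd1 (pd1 u) p • ν p + pd1 u p • pd1 ν p)
        + (pd1 u p • pd1 ν p + u p • pd1 (pd1 ν) p) := by
    have h : pd1 (pd1 (fun q => u q • ν q)) p
        = pd1 (fun q => pd1 u q • ν q + u q • pd1 ν q) p := pd1_congr hΩ hw1 hp
    rw [pd1_add (a := fun q => pd1 u q • ν q) (b := fun q => u q • pd1 ν q) ((du1 p hp).smul (dν p hp)) ((du p hp).smul (dN1 p hp)),
      pd1_smul (du1 p hp) (dν p hp), pd1_smul (du p hp) (dN1 p hp)] at h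
    exact h
  have hS2 : pd2 (pd2 (fun q => u q • ν q)) p
      = (pd2 (pd2 u) p • ν p + pd2 u p • pd2 ν p)
        + (pd2 u p • pd2 ν p + u p • pd2 (pd2 ν) p) := by
    have h : pd2 (pd2 (fun q => u q • ν q)) p
        = pd2 (fun q => pd2 u q • ν q + u q • pd2 ν q) p := pd2_congr hΩ hw2 hp
    rw [pd2_add (a := fun q => pd2 u q • ν q) (b := fun q => u q • pd2 ν q) ((du2 p hp).smul (dν p hp)) ((du p hp).smul (dN2 p hp)),
      pd2_smul (du2 p hp) (dν p hp), pd2_smul (du p hp) (dN2 p hp)] at h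
    exact h
  have hP2' : pd2 (pd2 ν) p = ((-(ρ p ^ 2 * (κ₁ p ^ 2 + κ₂ p ^ 2)))) • ν p - pd1 (pd1 ν) p := by
    rw [← hL]; abel
  have hjac : pd1 (pd1 u) p + pd2 (pd2 u) p
      + ρ p ^ 2 * (κ₁ p ^ 2 + κ₂ p ^ 2) * u p = 0 := hjacobi p hp
  rw [hS1, hS2, hP2', W1 p hp, W2 p hp]
  match_scalars <;> first | ring1 | linear_combination -hjac
end
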